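/- Let k ≥ 1 and let F : [0,1]^{2k} → [0,∞] be a quasi-convex function. Define the divergence Δ^F by Δ^F_X(μ₁‖μ₂) = sup over partitions {A₁,…,A_k} of X into k parts of F(μ₁(A₁),…,μ₁(A_k), μ₂(A₁),…,μ₂(A_k)). Then Δ^F is quasi-convex and k-generated: for every type X and all μ₁, μ₂ ∈ PMF(X), Δ^F_X(μ₁‖μ₂) equals the supremum over probabilistic maps γ : X → PMF({1,…,k}) of Δ^F_{{1,…,k}}(γ(μ₁)‖γ(μ₂)). -/

import Mathlib

open scoped ENNReal

lemma sum_dite_fin {M : Type} [AddCommMonoid M] {c n : ℕ} (hcn : c ≤ n) (f : Fin c → M) :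
    (∑ i : Fin n, if h : (i : ℕ) < c then f ⟨i, h⟩ else 0) = ∑ j : Fin c, f j := by
  classical
  rw [Fin.sum_univ_eq_sum_range (fun m => if h : m < c then f ⟨m, h⟩ else 0) n]
  rw [← Finset.sum_subset (Finset.range_subset_range.2 hcn)
    (fun m _ hm => dif_neg (fun hlt => hm (Finset.mem_range.2 hlt)))]
  rw [← Fin.sum_univ_eq_sum_range (fun m => if h : m < c then f ⟨m, h⟩ else 0) c]
  apply Finset.sum_congr rfl
  intro i _
  rw [dif_pos i.2]

lemma isCompact_convexHull_of_isCompact {E : Type} [NormedAddCommGroup E] [NormedSpace ℝ E]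
    [FiniteDimensional ℝ E] {s : Set E} (hs : IsCompact s) : IsCompact (convexHull ℝ s) := by
  classical
  rcases s.eq_empty_or_nonempty with rfl | ⟨z₀, hz₀⟩
  · simp [convexHull_empty, isCompact_empty]
  set n := Module.finrank ℝ E + 1 with hn
  have hcont : Continuous (fun p : (Fin n → ℝ) × (Fin n → E) => ∑ i, p.1 i • p.2 i) := by
    apply continuous_finset_sum
    intro i _
    exact ((continuous_apply i).comp continuous_fst).smul ((continuous_apply i).comp continuous_snd)
  have hK : IsCompact ((stdSimplex ℝ (Fin n)) ×ˢ (Set.univ.pi fun _ : Fin n => s)) :=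
    (isCompact_stdSimplex _ _).prod (isCompact_univ_pi fun _ => hs)
  have himg : convexHull ℝ s =
      (fun p : (Fin n → ℝ) × (Fin n → E) => ∑ i, p.1 i • p.2 i) ''
        ((stdSimplex ℝ (Fin n)) ×ˢ (Set.univ.pi fun _ : Fin n => s)) := by
    apply Set.Subset.antisymm
    · intro x hx
      obtain ⟨ι, hfin, z, w, hrange, haff, hpos, hsum1, hx⟩ :=
        eq_pos_convex_span_of_mem_convexHull hx
      haveI : Nonempty ι := by
        by_contra hemp
        rw [not_nonempty_iff] at hemp
        rw [Finset.univ_eq_empty, Finset.sum_empty] at hsum1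
        exact one_ne_zero hsum1.symm
      have hcard : Fintype.card ι ≤ n := by
        have h1 := haff.finrank_vectorSpan_add_one
        have h2 : Module.finrank ℝ (vectorSpan ℝ (Set.range z)) ≤ Module.finrank ℝ E :=
          Submodule.finrank_le _
        omega
      set c := Fintype.card ι with hc
      set e := Fintype.equivFin ι with he
      set w' : Fin n → ℝ := fun i => if h : (i : ℕ) < c then w (e.symm ⟨i, h⟩) else 0 with hw'
      set z' : Fin n → E := fun i => if h : (i : ℕ) < c then z (e.symm ⟨i, h⟩) else z₀ with hz'
      refine ⟨(w', z'), ⟨⟨fun i => ?_, ?_⟩, fun i _ => ?_⟩, ?_⟩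
      · simp only [hw']
        split
        · exact (hpos _).le
        · exact le_refl 0
      · show ∑ i, w' i = 1
        rw [show ∑ i, w' i = ∑ j : Fin c, w (e.symm j) from
          sum_dite_fin hcard fun j => w (e.symm j)]
        rw [Equiv.sum_comp e.symm w]
        exact hsum1
      · simp only [hz']
        split
        · exact hrange (Set.mem_range_self _)
        · exact hz₀
      · show ∑ i, w' i • z' i = x
        have : ∀ i : Fin n, w' i • z' i =
            (if h : (i : ℕ) < c then w (e.symm ⟨i, h⟩) • z (e.symm ⟨i, h⟩) else 0) := by
          intro i
          simp only [hw', hz']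
          split
          · rfl
          · rw [zero_smul]
        rw [Finset.sum_congr rfl fun i _ => this i]
        rw [sum_dite_fin hcard fun j => w (e.symm j) • z (e.symm j)]
        rw [Equiv.sum_comp e.symm fun j => w j • z j]
        exact hx
    · rintro x ⟨⟨w, z⟩, ⟨⟨hw0, hw1⟩, hzmem⟩, rfl⟩
      exact (convex_convexHull ℝ s).sum_mem (fun i _ => hw0 i) hw1
        (fun i _ => subset_convexHull ℝ s (hzmem i (Set.mem_univ i)))
  rw [himg]
  exact hK.image hcont

lemma pmf_outer_le_one {X : Type} (p : PMF X) (s : Set X) : p.toOuterMeasure s ≤ 1 := by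
  rw [PMF.toOuterMeasure_apply, ← p.tsum_coe]
  exact ENNReal.tsum_le_tsum fun x => Set.indicator_le_self _ _ _

lemma continuous_partition_prob {X : Type} {k : ℕ} (μ : PMF X) (i : Fin k) :
    Continuous fun P : X → Fin k => (μ.toOuterMeasure (P ⁻¹' {i})).toReal := by
  classical
  have h1 : ∀ P : X → Fin k, (μ.toOuterMeasure (P ⁻¹' {i})).toReal =
      ∑' x, (μ x).toReal * (if P x = i then (1 : ℝ) else 0) := by
    intro P
    rw [PMF.toOuterMeasure_apply, ENNReal.tsum_toReal_eq]
    · apply tsum_congr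
      intro x
      rw [Set.indicator_apply]
      by_cases h : x ∈ P ⁻¹' {i}
      · rw [if_pos h, if_pos (by simpa using h), mul_one]
      · rw [if_neg h, if_neg (by simpa using h), mul_zero, ENNReal.toReal_zero]
    · intro x
      exact fun ht => (μ.apply_ne_top x) (eq_top_iff.2 (ht ▸ Set.indicator_le_self _ _ x))
  simp only [h1]
  apply continuous_tsum (u := fun x => (μ x).toReal)
  · intro x
    have : Continuous fun v : Fin k => (μ x).toReal * (if v = i then (1 : ℝ) else 0) :=
      continuous_of_discreteTopology
    exact this.comp (continuous_apply x)
  · exact ENNReal.summable_toReal (by rw [μ.tsum_coe]; exact ENNReal.one_ne_top)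
  · intro x P
    rw [Real.norm_eq_abs, abs_mul]
    calc |(μ x).toReal| * |if P x = i then (1:ℝ) else 0| ≤ |(μ x).toReal| * 1 := by
          apply mul_le_mul_of_nonneg_left _ (abs_nonneg _)
          split <;> simp
      _ = (μ x).toReal := by rw [mul_one, abs_of_nonneg ENNReal.toReal_nonneg]

lemma pmf_tail_eq {X : Type} (μ : PMF X) (A : Finset X) :
    (∑ x ∈ A, μ x) + ∑' x, ((↑A : Set X)ᶜ).indicator (⇑μ) x = 1 := by
  classical
  have h1 : ∑' x, ((↑A : Set X)).indicator (⇑μ) x = ∑ x ∈ A, μ x := by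
    rw [tsum_eq_sum (s := A) (fun x hx => Set.indicator_of_notMem (by simpa using hx) _)]
    exact Finset.sum_congr rfl fun x hx => Set.indicator_of_mem (by simpa using hx) _
  rw [← h1, ← ENNReal.tsum_add, ← μ.tsum_coe]
  apply tsum_congr
  intro x
  by_cases h : x ∈ A
  · rw [Set.indicator_of_mem (by simpa using h), Set.indicator_of_notMem (by simpa using h),
      add_zero]
  · rw [Set.indicator_of_notMem (by simpa using h), Set.indicator_of_mem (by simpa using h),
      zero_add]

lemma pmf_tail_small {X : Type} (μ : PMF X) {ε : ℝ≥0∞} (hε : ε ≠ 0) :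
    ∃ A : Finset X, ∑' x, ((↑A : Set X)ᶜ).indicator (⇑μ) x < ε := by
  classical
  rcases lt_or_ge 1 ε with h1 | h1
  · refine ⟨∅, lt_of_le_of_lt ?_ h1⟩
    rw [← pmf_tail_eq μ ∅, Finset.sum_empty, zero_add]
  · have hεtop : ε ≠ ⊤ := fun h => by rw [h] at h1; exact absurd h1 (by simp)
    have hlt : (1 : ℝ≥0∞) - ε < 1 := ENNReal.sub_lt_self ENNReal.one_ne_top one_ne_zero hε
    have : (1 : ℝ≥0∞) - ε < ⨆ A : Finset X, ∑ x ∈ A, μ x := by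
      rw [← ENNReal.tsum_eq_iSup_sum, μ.tsum_coe]
      exact hlt
    obtain ⟨A, hA⟩ := lt_iSup_iff.1 this
    refine ⟨A, ?_⟩
    by_contra hcon
    push_neg at hcon
    have h2 : (∑ x ∈ A, μ x) + ε ≤ 1 := by
      calc (∑ x ∈ A, μ x) + ε ≤ (∑ x ∈ A, μ x) + ∑' x, ((↑A : Set X)ᶜ).indicator (⇑μ) x :=
            add_le_add_right hcon _
        _ = 1 := pmf_tail_eq μ A
    have h3 : (1 : ℝ≥0∞) < (∑ x ∈ A, μ x) + ε := by
      calc (1 : ℝ≥0∞) = (1 - ε) + ε := (tsub_add_cancel_of_le h1).symm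
        _ < (∑ x ∈ A, μ x) + ε := ENNReal.add_lt_add_right hεtop hA
    exact absurd (lt_of_lt_of_le h3 h2) (lt_irrefl _)

lemma marginal_sum {α : Type} [Fintype α] [DecidableEq α] {k : ℕ} (g : α → Fin k → ℝ≥0∞)
    (hg : ∀ y, ∑ i, g y i = 1) (x' : α) (i : Fin k) :
    ∑ P : α → Fin k, (∏ y, g y (P y)) * (if P x' = i then 1 else 0) = g x' i := by
  have h1 : ∀ P : α → Fin k, (∏ y, g y (P y)) * (if P x' = i then (1:ℝ≥0∞) else 0) =
      ∏ y, (g y (P y) * (if y = x' then (if P y = i then 1 else 0) else 1)) := by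
    intro P
    rw [Finset.prod_mul_distrib,
      Finset.prod_ite_eq' Finset.univ x' (fun y => if P y = i then (1:ℝ≥0∞) else 0),
      if_pos (Finset.mem_univ x')]
  simp only [h1]
  rw [show (Finset.univ : Finset (α → Fin k)) =
      Fintype.piFinset (fun _ : α => (Finset.univ : Finset (Fin k))) from
    (Fintype.piFinset_univ).symm]
  rw [← Finset.prod_univ_sum (fun _ : α => (Finset.univ : Finset (Fin k)))
    (fun y j => g y j * if y = x' then (if j = i then (1:ℝ≥0∞) else 0) else 1)]
  rw [Finset.prod_eq_single x']
  · simp [mul_ite, mul_one, mul_zero, Finset.sum_ite_eq']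
  · intro y _ hy
    simp only [hy, if_false, mul_one]
    exact hg y
  · intro h
    exact absurd (Finset.mem_univ x') h

/-- The divergence associated with a function `F` on pairs of probability vectors:
the supremum of `F` over probabilities of `k`-partitions (a `k`-partition of `X` is
encoded by a function `P : X → Fin k`, with parts `A_i = P⁻¹ {i}`). -/
noncomputable def DeltaF (k : ℕ)
    (F : (Fin k → ℝ≥0∞) × (Fin k → ℝ≥0∞) → ℝ≥0∞)
    (X : Type) (μ₁ μ₂ : PMF X) : ℝ≥0∞ :=
  ⨆ P : X → Fin k,
    F (fun i => μ₁.toOuterMeasure (P ⁻¹' {i}),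
       fun i => μ₂.toOuterMeasure (P ⁻¹' {i}))

lemma core {k : ℕ} (hk : 1 ≤ k)
    (F : (Fin k → ℝ≥0∞) × (Fin k → ℝ≥0∞) → ℝ≥0∞)
    (hF : ∀ (N : ℕ) (w : PMF (Fin N))
        (v : Fin N → (Fin k → ℝ≥0∞) × (Fin k → ℝ≥0∞)),
      (∀ m i, (v m).1 i ≤ 1 ∧ (v m).2 i ≤ 1) →
      F (fun i => ∑ m, w m * (v m).1 i, fun i => ∑ m, w m * (v m).2 i) ≤
        ⨆ m, F (v m))
    (X : Type) (μ₁ μ₂ : PMF X) (g : X → Fin k → ℝ≥0∞) (hg : ∀ x, ∑ i, g x i = 1) :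
    F (fun i => ∑' x, μ₁ x * g x i, fun i => ∑' x, μ₂ x * g x i) ≤ DeltaF k F X μ₁ μ₂ := by
  classical
  have hg1 : ∀ x i, g x i ≤ 1 := by
    intro x i
    rw [← hg x]
    exact Finset.single_le_sum (fun j _ => zero_le) (Finset.mem_univ i)
  have hQle : ∀ (μ : PMF X) (i : Fin k), (∑' x, μ x * g x i) ≤ 1 := by
    intro μ i
    calc ∑' x, μ x * g x i ≤ ∑' x, μ x * 1 :=
          ENNReal.tsum_le_tsum fun x => mul_le_mul_right (hg1 x i) _
      _ = 1 := by simp [μ.tsum_coe]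
  set φ : (X → Fin k) → (Fin k → ℝ) × (Fin k → ℝ) := fun P =>
    (fun i => (μ₁.toOuterMeasure (P ⁻¹' {i})).toReal,
     fun i => (μ₂.toOuterMeasure (P ⁻¹' {i})).toReal) with hφ
  have hφcont : Continuous φ :=
    Continuous.prodMk (continuous_pi fun i => continuous_partition_prob μ₁ i)
      (continuous_pi fun i => continuous_partition_prob μ₂ i)
  have hSc : IsCompact (Set.range φ) := isCompact_range hφcont
  set q : (Fin k → ℝ) × (Fin k → ℝ) :=
    (fun i => (∑' x, μ₁ x * g x i).toReal, fun i => (∑' x, μ₂ x * g x i).toReal) with hq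
  -- Step 1 : q lies in the convex hull of the range of φ
  have hqmem : q ∈ convexHull ℝ (Set.range φ) := by
    have hclosed : IsClosed (convexHull ℝ (Set.range φ)) :=
      (isCompact_convexHull_of_isCompact hSc).isClosed
    rw [← hclosed.closure_eq]
    rw [Metric.mem_closure_iff]
    intro ε hε
    set ε' : ℝ≥0∞ := ENNReal.ofReal (ε / 2) with hε'def
    have hε'0 : ε' ≠ 0 := ne_of_gt (ENNReal.ofReal_pos.2 (half_pos hε))
    obtain ⟨A₁, hA₁⟩ := pmf_tail_small μ₁ hε'0
    obtain ⟨A₂, hA₂⟩ := pmf_tail_small μ₂ hε'0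
    set A : Finset X := A₁ ∪ A₂ with hA
    have htail : ∀ (μ : PMF X) (A' : Finset X),
        (∑' x, ((↑A' : Set X)ᶜ).indicator (⇑μ) x < ε') → A' ⊆ A →
        ∑' x, ((↑A : Set X)ᶜ).indicator (⇑μ) x < ε' := by
      intro μ A' hA' hsub
      refine lt_of_le_of_lt (ENNReal.tsum_le_tsum fun x => ?_) hA'
      exact Set.indicator_le_indicator_of_subset
        (Set.compl_subset_compl.2 (by exact_mod_cast Finset.coe_subset.2 hsub))
        (fun a => zero_le) x
    have htail₁ : ∑' x, ((↑A : Set X)ᶜ).indicator (⇑μ₁) x < ε' :=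
      htail μ₁ A₁ hA₁ Finset.subset_union_left
    have htail₂ : ∑' x, ((↑A : Set X)ᶜ).indicator (⇑μ₂) x < ε' :=
      htail μ₂ A₂ hA₂ Finset.subset_union_right
    set j₀ : Fin k := ⟨0, hk⟩ with hj₀
    set wgt : (↥A → Fin k) → ℝ≥0∞ := fun P => ∏ y : ↥A, g ↑y (P y) with hwgt
    have hwgt1 : ∀ P, wgt P ≤ 1 := fun P =>
      Finset.prod_le_one (fun _ _ => zero_le) (fun y _ => hg1 _ _)
    have hwgtsum : ∑ P : ↥A → Fin k, wgt P = 1 := by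
      rw [show (Finset.univ : Finset (↥A → Fin k)) =
          Fintype.piFinset (fun _ : ↥A => (Finset.univ : Finset (Fin k))) from
        (Fintype.piFinset_univ).symm]
      rw [← Finset.prod_univ_sum (fun _ : ↥A => (Finset.univ : Finset (Fin k)))
        (fun y j => g ↑y j)]
      exact Finset.prod_eq_one fun y _ => hg ↑y
    set ext : (↥A → Fin k) → (X → Fin k) :=
      fun P x => if h : x ∈ A then P ⟨x, h⟩ else j₀ with hext
    -- ENNReal computation of the mixture components
    have hcomp : ∀ (μ : PMF X) (i : Fin k),
        ∑ P : ↥A → Fin k, wgt P * μ.toOuterMeasure (ext P ⁻¹' {i}) =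
        ∑' x, μ x * (if h : x ∈ A then g x i else (if i = j₀ then 1 else 0)) := by
      intro μ i
      have e1 : ∀ P : ↥A → Fin k, wgt P * μ.toOuterMeasure (ext P ⁻¹' {i}) =
          ∑' x, wgt P * (if ext P x = i then μ x else 0) := by
        intro P
        rw [PMF.toOuterMeasure_apply, ← ENNReal.tsum_mul_left]
        apply tsum_congr
        intro x
        congr 1
        rw [Set.indicator_apply]
        by_cases h : ext P x = i
        · rw [if_pos (by simpa using h), if_pos h]
        · rw [if_neg (by simpa using h), if_neg h]
      calc ∑ P : ↥A → Fin k, wgt P * μ.toOuterMeasure (ext P ⁻¹' {i})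
          = ∑ P : ↥A → Fin k, ∑' x, wgt P * (if ext P x = i then μ x else 0) :=
            Finset.sum_congr rfl fun P _ => e1 P
        _ = ∑' x, ∑ P : ↥A → Fin k, wgt P * (if ext P x = i then μ x else 0) := by
            rw [← tsum_fintype (L := .unconditional _), ENNReal.tsum_comm]
            exact tsum_congr fun x => tsum_fintype _
        _ = ∑' x, μ x * (if h : x ∈ A then g x i else (if i = j₀ then 1 else 0)) := by
            apply tsum_congr
            intro x
            by_cases hx : x ∈ A
            · rw [dif_pos hx]
              have e2 : ∀ P : ↥A → Fin k, wgt P * (if ext P x = i then μ x else 0) =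
                  μ x * (wgt P * (if P ⟨x, hx⟩ = i then 1 else 0)) := by
                intro P
                have : ext P x = P ⟨x, hx⟩ := dif_pos hx
                rw [this]
                by_cases h : P ⟨x, hx⟩ = i <;> simp [h, mul_comm]
              rw [Finset.sum_congr rfl fun P _ => e2 P, ← Finset.mul_sum]
              congr 1
              exact marginal_sum (fun (y : ↥A) => g ↑y) (fun y => hg ↑y) ⟨x, hx⟩ i
            · rw [dif_neg hx]
              have e3 : ∀ P : ↥A → Fin k, wgt P * (if ext P x = i then μ x else 0) =
                  wgt P * (if i = j₀ then μ x else 0) := by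
                intro P
                have : ext P x = j₀ := dif_neg hx
                rw [this]
                by_cases h : i = j₀
                · simp [h]
                · have h' : j₀ ≠ i := fun hh => h hh.symm
                  simp [h, h']
              rw [Finset.sum_congr rfl fun P _ => e3 P, ← Finset.sum_mul, hwgtsum, one_mul]
              by_cases h : i = j₀
              · rw [if_pos h, if_pos h, mul_one]
              · rw [if_neg h, if_neg h, mul_zero]
    have hBle : ∀ (μ : PMF X) (i : Fin k),
        ∑ P : ↥A → Fin k, wgt P * μ.toOuterMeasure (ext P ⁻¹' {i}) ≤ 1 := by
      intro μ i
      calc ∑ P : ↥A → Fin k, wgt P * μ.toOuterMeasure (ext P ⁻¹' {i})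
          ≤ ∑ P : ↥A → Fin k, wgt P * 1 :=
            Finset.sum_le_sum fun P _ => mul_le_mul_right (pmf_outer_le_one μ _) _
        _ = 1 := by simp only [mul_one]; exact hwgtsum
    have hwr_sum : ∑ P : ↥A → Fin k, (wgt P).toReal = 1 := by
      rw [← ENNReal.toReal_sum (fun P _ => ne_top_of_le_ne_top ENNReal.one_ne_top (hwgt1 P))]
      rw [hwgtsum]
      exact ENNReal.toReal_one
    set b := Finset.univ.centerMass (fun P : ↥A → Fin k => (wgt P).toReal)
      (fun P => φ (ext P)) with hb
    have hbmem : b ∈ convexHull ℝ (Set.range φ) :=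
      Finset.centerMass_mem_convexHull _ (fun P _ => ENNReal.toReal_nonneg)
        (by rw [hwr_sum]; exact one_pos) (fun P _ => Set.mem_range_self _)
    have hbeq : b = ∑ P : ↥A → Fin k, (wgt P).toReal • φ (ext P) :=
      Finset.centerMass_eq_of_sum_1 _ _ hwr_sum
    refine ⟨b, hbmem, ?_⟩
    -- distance estimate
    have hcompdist : ∀ (μ : PMF X), (∑' x, ((↑A : Set X)ᶜ).indicator (⇑μ) x < ε') →
        ∀ i : Fin k,
        dist ((∑' x, μ x * g x i).toReal)
          (∑ P : ↥A → Fin k, (wgt P).toReal * (μ.toOuterMeasure (ext P ⁻¹' {i})).toReal)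
          ≤ ε / 2 := by
      intro μ hμ i
      set B := ∑ P : ↥A → Fin k, wgt P * μ.toOuterMeasure (ext P ⁻¹' {i}) with hBdef
      have hreal : ∑ P : ↥A → Fin k, (wgt P).toReal * (μ.toOuterMeasure (ext P ⁻¹' {i})).toReal
          = B.toReal := by
        rw [hBdef, ENNReal.toReal_sum (fun P _ => ENNReal.mul_ne_top
          (ne_top_of_le_ne_top ENNReal.one_ne_top (hwgt1 P))
          (ne_top_of_le_ne_top ENNReal.one_ne_top (pmf_outer_le_one μ _)))]
        exact Finset.sum_congr rfl fun P _ => (ENNReal.toReal_mul).symm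
      rw [hreal]
      set Qv := ∑' x, μ x * g x i with hQv
      set t := ∑' x, ((↑A : Set X)ᶜ).indicator (⇑μ) x with ht
      have hQvle : Qv ≤ 1 := hQle μ i
      have hBle' : B ≤ 1 := hBle μ i
      have htne : t ≠ ⊤ := ne_top_of_lt (lt_of_lt_of_le hμ le_top)
      have htle : t.toReal ≤ ε / 2 := by
        calc t.toReal ≤ ε'.toReal := ENNReal.toReal_mono ENNReal.ofReal_ne_top hμ.le
          _ = ε / 2 := ENNReal.toReal_ofReal (half_pos hε).le
      have h1 : B ≤ Qv + t := by
        rw [hBdef, hcomp μ i, hQv, ht, ← ENNReal.tsum_add]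
        apply ENNReal.tsum_le_tsum
        intro x
        by_cases hx : x ∈ A
        · rw [dif_pos hx, Set.indicator_of_notMem (by simpa using hx)]
          rw [add_zero]
        · rw [dif_neg hx, Set.indicator_of_mem (by simpa using hx)]
          calc μ x * (if i = j₀ then (1:ℝ≥0∞) else 0) ≤ μ x * 1 := by
                apply mul_le_mul_right
                split <;> simp
            _ = μ x := mul_one _
            _ ≤ μ x * g x i + μ x := le_add_self
      have h2 : Qv ≤ B + t := by
        rw [hBdef, hcomp μ i, hQv, ht, ← ENNReal.tsum_add]
        apply ENNReal.tsum_le_tsum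
        intro x
        by_cases hx : x ∈ A
        · rw [dif_pos hx, Set.indicator_of_notMem (by simpa using hx)]
          rw [add_zero]
        · rw [dif_neg hx, Set.indicator_of_mem (by simpa using hx)]
          calc μ x * g x i ≤ μ x * 1 := mul_le_mul_right (hg1 x i) _
            _ = μ x := mul_one _
            _ ≤ μ x * (if i = j₀ then 1 else 0) + μ x := le_add_self
      rw [Real.dist_eq, abs_sub_le_iff]
      constructor
      · have : Qv.toReal ≤ (B + t).toReal :=
          ENNReal.toReal_mono (ENNReal.add_ne_top.2
            ⟨ne_top_of_le_ne_top ENNReal.one_ne_top hBle', htne⟩) h2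
        rw [ENNReal.toReal_add (ne_top_of_le_ne_top ENNReal.one_ne_top hBle') htne] at this
        linarith
      · have : B.toReal ≤ (Qv + t).toReal :=
          ENNReal.toReal_mono (ENNReal.add_ne_top.2
            ⟨ne_top_of_le_ne_top ENNReal.one_ne_top hQvle, htne⟩) h1
        rw [ENNReal.toReal_add (ne_top_of_le_ne_top ENNReal.one_ne_top hQvle) htne] at this
        linarith
    have hbfst : ∀ i, b.1 i =
        ∑ P : ↥A → Fin k, (wgt P).toReal * (μ₁.toOuterMeasure (ext P ⁻¹' {i})).toReal := by
      intro i
      rw [hbeq, Prod.fst_sum, Finset.sum_apply]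
      exact Finset.sum_congr rfl fun P _ => rfl
    have hbsnd : ∀ i, b.2 i =
        ∑ P : ↥A → Fin k, (wgt P).toReal * (μ₂.toOuterMeasure (ext P ⁻¹' {i})).toReal := by
      intro i
      rw [hbeq, Prod.snd_sum, Finset.sum_apply]
      exact Finset.sum_congr rfl fun P _ => rfl
    have hd1 : dist q.1 b.1 ≤ ε / 2 := by
      apply (dist_pi_le_iff (half_pos hε).le).2
      intro i
      rw [hbfst i]
      exact hcompdist μ₁ htail₁ i
    have hd2 : dist q.2 b.2 ≤ ε / 2 := by
      apply (dist_pi_le_iff (half_pos hε).le).2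
      intro i
      rw [hbsnd i]
      exact hcompdist μ₂ htail₂ i
    calc dist q b = max (dist q.1 b.1) (dist q.2 b.2) := Prod.dist_eq
      _ ≤ ε / 2 := max_le hd1 hd2
      _ < ε := half_lt_self hε
  -- Step 2 : extract a finite convex combination and apply quasi-convexity
  rw [convexHull_eq] at hqmem
  obtain ⟨ι, t, w, z, hw0, hw1, hz, hcm⟩ := hqmem
  rw [Finset.centerMass_eq_of_sum_1 _ _ hw1] at hcm
  have hz' : ∀ a : ↥t, ∃ Q : X → Fin k, φ Q = z ↑a := fun a => hz ↑a a.2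
  choose P hP using hz'
  set N := Fintype.card ↥t with hN
  set e : ↥t ≃ Fin N := Fintype.equivFin ↥t with he
  have hwfun : ∑ m : Fin N, ENNReal.ofReal (w ↑(e.symm m)) = 1 := by
    rw [Equiv.sum_comp e.symm (fun a : ↥t => ENNReal.ofReal (w ↑a))]
    rw [Finset.sum_coe_sort t (fun a => ENNReal.ofReal (w a))]
    rw [← ENNReal.ofReal_sum_of_nonneg hw0, hw1, ENNReal.ofReal_one]
  set wp : PMF (Fin N) := PMF.ofFintype (fun m => ENNReal.ofReal (w ↑(e.symm m))) hwfun
    with hwp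
  set v : Fin N → (Fin k → ℝ≥0∞) × (Fin k → ℝ≥0∞) := fun m =>
    (fun i => μ₁.toOuterMeasure (P (e.symm m) ⁻¹' {i}),
     fun i => μ₂.toOuterMeasure (P (e.symm m) ⁻¹' {i})) with hv
  have hbnd : ∀ m i, (v m).1 i ≤ 1 ∧ (v m).2 i ≤ 1 := fun m i =>
    ⟨pmf_outer_le_one _ _, pmf_outer_le_one _ _⟩
  have hwpne : ∀ m, wp m ≠ ⊤ := fun m => PMF.apply_ne_top wp m
  have hvne : ∀ m i, (v m).1 i ≠ ⊤ ∧ (v m).2 i ≠ ⊤ := fun m i =>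
    ⟨ne_top_of_le_ne_top ENNReal.one_ne_top (hbnd m i).1,
     ne_top_of_le_ne_top ENNReal.one_ne_top (hbnd m i).2⟩
  have harg1 : (fun i => ∑' x, μ₁ x * g x i) = (fun i => ∑ m, wp m * (v m).1 i) := by
    funext i
    have hne1 : (∑' x, μ₁ x * g x i) ≠ ⊤ := ne_top_of_le_ne_top ENNReal.one_ne_top (hQle μ₁ i)
    have hne2 : (∑ m, wp m * (v m).1 i) ≠ ⊤ :=
      (ENNReal.sum_lt_top.2 fun m _ =>
        ENNReal.mul_lt_top (hwpne m).lt_top (hvne m i).1.lt_top).ne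
    apply (ENNReal.toReal_eq_toReal_iff' hne1 hne2).1
    have step1 : (∑ m, wp m * (v m).1 i).toReal = ∑ m, w ↑(e.symm m) * (z ↑(e.symm m)).1 i := by
      rw [ENNReal.toReal_sum (fun m _ =>
        ENNReal.mul_ne_top (hwpne m) (hvne m i).1)]
      apply Finset.sum_congr rfl
      intro m _
      rw [ENNReal.toReal_mul]
      congr 1
      · show (ENNReal.ofReal (w ↑(e.symm m))).toReal = w ↑(e.symm m)
        exact ENNReal.toReal_ofReal (hw0 _ (e.symm m).2)
      · show ((v m).1 i).toReal = (z ↑(e.symm m)).1 i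
        rw [← hP (e.symm m)]
    rw [step1]
    rw [Equiv.sum_comp e.symm (fun a : ↥t => w ↑a * (z ↑a).1 i)]
    rw [Finset.sum_coe_sort t (fun a => w a * (z a).1 i)]
    have : q.1 i = ∑ a ∈ t, w a * (z a).1 i := by
      rw [← hcm, Prod.fst_sum, Finset.sum_apply]
      apply Finset.sum_congr rfl
      intro a _
      rfl
    rw [← this]
  have harg2 : (fun i => ∑' x, μ₂ x * g x i) = (fun i => ∑ m, wp m * (v m).2 i) := by
    funext i
    have hne1 : (∑' x, μ₂ x * g x i) ≠ ⊤ := ne_top_of_le_ne_top ENNReal.one_ne_top (hQle μ₂ i)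
    have hne2 : (∑ m, wp m * (v m).2 i) ≠ ⊤ :=
      (ENNReal.sum_lt_top.2 fun m _ =>
        ENNReal.mul_lt_top (hwpne m).lt_top (hvne m i).2.lt_top).ne
    apply (ENNReal.toReal_eq_toReal_iff' hne1 hne2).1
    have step1 : (∑ m, wp m * (v m).2 i).toReal = ∑ m, w ↑(e.symm m) * (z ↑(e.symm m)).2 i := by
      rw [ENNReal.toReal_sum (fun m _ =>
        ENNReal.mul_ne_top (hwpne m) (hvne m i).2)]
      apply Finset.sum_congr rfl
      intro m _
      rw [ENNReal.toReal_mul]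
      congr 1
      · show (ENNReal.ofReal (w ↑(e.symm m))).toReal = w ↑(e.symm m)
        exact ENNReal.toReal_ofReal (hw0 _ (e.symm m).2)
      · show ((v m).2 i).toReal = (z ↑(e.symm m)).2 i
        rw [← hP (e.symm m)]
    rw [step1]
    rw [Equiv.sum_comp e.symm (fun a : ↥t => w ↑a * (z ↑a).2 i)]
    rw [Finset.sum_coe_sort t (fun a => w a * (z a).2 i)]
    have : q.2 i = ∑ a ∈ t, w a * (z a).2 i := by
      rw [← hcm, Prod.snd_sum, Finset.sum_apply]
      apply Finset.sum_congr rfl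
      intro a _
      rfl
    rw [← this]
  calc F (fun i => ∑' x, μ₁ x * g x i, fun i => ∑' x, μ₂ x * g x i)
      = F (fun i => ∑ m, wp m * (v m).1 i, fun i => ∑ m, wp m * (v m).2 i) := by
        rw [harg1, harg2]
    _ ≤ ⨆ m, F (v m) := hF N wp v hbnd
    _ ≤ DeltaF k F X μ₁ μ₂ := by
        apply iSup_le
        intro m
        exact le_iSup (fun Pp : X → Fin k =>
          F (fun i => μ₁.toOuterMeasure (Pp ⁻¹' {i}),
             fun i => μ₂.toOuterMeasure (Pp ⁻¹' {i}))) (P (e.symm m))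

lemma partition_sum_one {k : ℕ} (p : PMF (Fin k)) (Q : Fin k → Fin k) :
    ∑ i, p.toOuterMeasure (Q ⁻¹' {i}) = 1 := by
  classical
  have h1 : ∀ i, p.toOuterMeasure (Q ⁻¹' {i}) = ∑ j, (if Q j = i then p j else 0) := by
    intro i
    rw [PMF.toOuterMeasure_apply, tsum_fintype]
    apply Finset.sum_congr rfl
    intro j _
    rw [Set.indicator_apply]
    by_cases h : Q j = i
    · rw [if_pos (by simpa using h), if_pos h]
    · rw [if_neg (by simpa using h), if_neg h]
  simp only [h1]
  rw [Finset.sum_comm]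
  have h2 : ∀ j, ∑ i, (if Q j = i then p j else 0) = p j := by
    intro j
    rw [Finset.sum_ite_eq Finset.univ (Q j) (fun _ => p j)]
    exact if_pos (Finset.mem_univ _)
  rw [Finset.sum_congr rfl fun j _ => h2 j]
  rw [← tsum_fintype (L := .unconditional _)]
  exact p.tsum_coe


/-- Suprema of quasi-convex functions over probabilities of `k`-partitions are
quasi-convex, `k`-generated divergences. -/
theorem DeltaF_quasiConvex_and_kGenerated (k : ℕ) (hk : 1 ≤ k)
    (F : (Fin k → ℝ≥0∞) × (Fin k → ℝ≥0∞) → ℝ≥0∞)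
    (hF : ∀ (N : ℕ) (w : PMF (Fin N))
        (v : Fin N → (Fin k → ℝ≥0∞) × (Fin k → ℝ≥0∞)),
      (∀ m i, (v m).1 i ≤ 1 ∧ (v m).2 i ≤ 1) →
      F (fun i => ∑ m, w m * (v m).1 i, fun i => ∑ m, w m * (v m).2 i) ≤
        ⨆ m, F (v m)) :
    -- `Δ^F` is quasi-convex:
    (∀ (X : Type) (N : ℕ) (w : PMF (Fin N)) (μ₁ μ₂ : Fin N → PMF X),
      DeltaF k F X (w.bind μ₁) (w.bind μ₂) ≤ ⨆ m, DeltaF k F X (μ₁ m) (μ₂ m)) ∧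
    -- `Δ^F` is `k`-generated:
    (∀ (X : Type) (μ₁ μ₂ : PMF X),
      DeltaF k F X μ₁ μ₂ =
        ⨆ γ : X → PMF (Fin k), DeltaF k F (Fin k) (μ₁.bind γ) (μ₂.bind γ)) := by
  constructor
  · -- quasi-convexity
    intro X N w μ₁ μ₂
    apply iSup_le
    intro P
    have harg : ∀ (μ : Fin N → PMF X) (A : Set X),
        (w.bind μ).toOuterMeasure A = ∑ m, w m * (μ m).toOuterMeasure A := by
      intro μ A
      rw [PMF.toOuterMeasure_bind_apply, tsum_fintype]
    set v : Fin N → (Fin k → ℝ≥0∞) × (Fin k → ℝ≥0∞) := fun m =>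
      (fun i => (μ₁ m).toOuterMeasure (P ⁻¹' {i}),
       fun i => (μ₂ m).toOuterMeasure (P ⁻¹' {i})) with hv
    have hbnd : ∀ m i, (v m).1 i ≤ 1 ∧ (v m).2 i ≤ 1 := fun m i =>
      ⟨pmf_outer_le_one _ _, pmf_outer_le_one _ _⟩
    calc F (fun i => (w.bind μ₁).toOuterMeasure (P ⁻¹' {i}),
            fun i => (w.bind μ₂).toOuterMeasure (P ⁻¹' {i}))
        = F (fun i => ∑ m, w m * (v m).1 i, fun i => ∑ m, w m * (v m).2 i) := by
          congr 1
          refine Prod.ext ?_ ?_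
          · funext i; exact harg μ₁ _
          · funext i; exact harg μ₂ _
      _ ≤ ⨆ m, F (v m) := hF N w v hbnd
      _ ≤ ⨆ m, DeltaF k F X (μ₁ m) (μ₂ m) := by
          apply iSup_mono
          intro m
          exact le_iSup (fun Pp : X → Fin k =>
            F (fun i => (μ₁ m).toOuterMeasure (Pp ⁻¹' {i}),
               fun i => (μ₂ m).toOuterMeasure (Pp ⁻¹' {i}))) P
  · -- k-generatedness
    intro X μ₁ μ₂
    apply le_antisymm
    · apply iSup_le
      intro P
      refine le_trans ?_ (le_iSup _ (fun x => PMF.pure (P x)))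
      have key : ∀ (μ : PMF X) (i : Fin k),
          (μ.bind fun x => PMF.pure (P x)).toOuterMeasure ((id : Fin k → Fin k) ⁻¹' {i}) =
          μ.toOuterMeasure (P ⁻¹' {i}) := by
        intro μ i
        rw [show (μ.bind fun x => PMF.pure (P x)) = μ.map P from rfl,
          PMF.toOuterMeasure_map_apply]
        congr 1
      refine le_trans (le_of_eq ?_) (le_iSup (fun Q : Fin k → Fin k =>
        F (fun i => (μ₁.bind fun x => PMF.pure (P x)).toOuterMeasure (Q ⁻¹' {i}),
           fun i => (μ₂.bind fun x => PMF.pure (P x)).toOuterMeasure (Q ⁻¹' {i})))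
        (id : Fin k → Fin k))
      congr 1
      refine Prod.ext ?_ ?_
      · funext i; exact (key μ₁ i).symm
      · funext i; exact (key μ₂ i).symm
    · apply iSup_le
      intro γ
      apply iSup_le
      intro Q
      set g : X → Fin k → ℝ≥0∞ := fun x i => (γ x).toOuterMeasure (Q ⁻¹' {i}) with hgdef
      have hg : ∀ x, ∑ i, g x i = 1 := fun x => partition_sum_one (γ x) Q
      have harg : ∀ (μ : PMF X) (i : Fin k),
          (μ.bind γ).toOuterMeasure (Q ⁻¹' {i}) = ∑' x, μ x * g x i := by
        intro μ i
        rw [PMF.toOuterMeasure_bind_apply]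
      calc F (fun i => (μ₁.bind γ).toOuterMeasure (Q ⁻¹' {i}),
              fun i => (μ₂.bind γ).toOuterMeasure (Q ⁻¹' {i}))
          = F (fun i => ∑' x, μ₁ x * g x i, fun i => ∑' x, μ₂ x * g x i) := by
            congr 1
            refine Prod.ext ?_ ?_
            · funext i; exact harg μ₁ i
            · funext i; exact harg μ₂ i
        _ ≤ DeltaF k F X μ₁ μ₂ := core hk F hF X μ₁ μ₂ g hg
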